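/- Let a > 0 and c ≥ 1, and let f : (0,∞) → [0,∞) be measurable with f(x) ≤ c · f(a) · max(1, x/a) for all x > 0. Then for every ξ > 0, f(a) ≥ ξ (Lf)(ξ) / (c (1 + (aξ)^{-1} e^{-aξ})), where (Lf)(ξ) = ∫_0^∞ e^{-ξx} f(x) dx. -/

import Mathlib

open Real MeasureTheory Set Filter Topology

theorem stmt3 (a c ξ : ℝ) (ha : 0 < a) (hc : 1 ≤ c) (hξ : 0 < ξ)
    (f : ℝ → ℝ) (hmeas : Measurable f)
    (hnonneg : ∀ x > 0, 0 ≤ f x)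
    (hbound : ∀ x > 0, f x ≤ c * f a * max 1 (x/a)) :
    ξ * (∫ x in Set.Ioi (0:ℝ), Real.exp (-ξ*x) * f x) /
        (c * (1 + (a*ξ)⁻¹ * Real.exp (-(a*ξ)))) ≤ f a := by
  have hξ' : ξ ≠ 0 := hξ.ne'
  have ha' : a ≠ 0 := ha.ne'
  have hc0 : (0:ℝ) < c := zero_lt_one.trans_le hc
  have hfa : 0 ≤ f a := hnonneg a ha
  set E := Real.exp (-(a*ξ)) with hE
  have hEpos : 0 < E := Real.exp_pos _
  -- derivative of exp(-ξx)
  have hd : ∀ x : ℝ, HasDerivAt (fun x => Real.exp (-ξ*x)) (Real.exp (-ξ*x) * (-ξ)) x := by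
    intro x
    have h1 : HasDerivAt (fun x : ℝ => -ξ*x) (-ξ) x := by
      simpa using (hasDerivAt_id x).const_mul (-ξ)
    exact h1.exp
  -- integral over (0, a]
  have hI1 : ∫ x in Ioc (0:ℝ) a, Real.exp (-ξ*x) = (1 - E)/ξ := by
    rw [← intervalIntegral.integral_of_le ha.le]
    have hderiv : ∀ x ∈ uIcc (0:ℝ) a,
        HasDerivAt (fun x => -(1/ξ) * Real.exp (-ξ*x)) (Real.exp (-ξ*x)) x := by
      intro x _
      have := (hd x).const_mul (-(1/ξ))
      refine this.congr_deriv ?_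
      linear_combination (Real.exp (-ξ*x)) * mul_inv_cancel₀ hξ'
    rw [intervalIntegral.integral_eq_sub_of_hasDerivAt hderiv
      (Continuous.intervalIntegrable (by continuity) _ _)]
    rw [hE, show -ξ*a = -(a*ξ) by ring]
    field_simp
    ring
    rw [Real.exp_zero]; ring
  -- integral over (a, ∞)
  have hF2 : ∀ x ∈ Ici a, HasDerivAt (fun x => -(x/(a*ξ) + 1/(a*ξ^2)) * Real.exp (-ξ*x))
      (Real.exp (-ξ*x) * (x/a)) x := by
    intro x _
    have h2 : HasDerivAt (fun x : ℝ => -(x/(a*ξ) + 1/(a*ξ^2))) (-(1/(a*ξ))) x := by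
      exact (((hasDerivAt_id x).div_const (a*ξ)).add_const (1/(a*ξ^2))).neg
    have := h2.mul (hd x)
    refine this.congr_deriv ?_
    linear_combination (Real.exp (-ξ*x) * (x/a) + Real.exp (-ξ*x) / (a*ξ)) * mul_inv_cancel₀ hξ'
  have hx1 : Tendsto (fun x:ℝ => x * Real.exp (-ξ*x)) atTop (𝓝 0) := by
    have h0 : Tendsto (fun x:ℝ => ξ * x) atTop atTop := tendsto_id.const_mul_atTop hξ
    have h1 := (tendsto_pow_mul_exp_neg_atTop_nhds_zero 1).comp h0
    have h2 := h1.const_mul (1/ξ)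
    rw [mul_zero] at h2
    refine h2.congr fun x => ?_
    simp only [Function.comp, pow_one, neg_mul]
    field_simp
  have he : Tendsto (fun x:ℝ => Real.exp (-ξ*x)) atTop (𝓝 0) := by
    have := tendsto_exp_neg_atTop_nhds_zero.comp (tendsto_id.const_mul_atTop hξ)
    refine this.congr fun x => ?_
    simp [Function.comp, neg_mul]
  have hlim : Tendsto (fun x => -(x/(a*ξ) + 1/(a*ξ^2)) * Real.exp (-ξ*x)) atTop (𝓝 0) := by
    have h3 := ((hx1.const_mul (1/(a*ξ))).add (he.const_mul (1/(a*ξ^2)))).neg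
    simp only [mul_zero, add_zero, neg_zero] at h3
    refine h3.congr fun x => ?_
    ring
  have hpos2 : ∀ x ∈ Ioi a, 0 ≤ Real.exp (-ξ*x) * (x/a) := fun x hx =>
    mul_nonneg (Real.exp_pos _).le (div_nonneg (ha.trans hx).le ha.le)
  have hI2int : IntegrableOn (fun x => Real.exp (-ξ*x) * (x/a)) (Ioi a) :=
    integrableOn_Ioi_deriv_of_nonneg' hF2 hpos2 hlim
  have hI2 : ∫ x in Ioi a, Real.exp (-ξ*x) * (x/a) = (1/ξ + 1/(a*ξ^2)) * E := by
    rw [integral_Ioi_of_hasDerivAt_of_nonneg' hF2 hpos2 hlim, hE,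
      show -ξ*a = -(a*ξ) by ring]
    field_simp
    ring
  -- the comparison function
  set G : ℝ → ℝ := fun x => Real.exp (-ξ*x) * max 1 (x/a) with hG
  have hGcont : Continuous G := by
    apply Continuous.mul (by continuity)
    exact continuous_const.max (continuous_id.div_const a)
  have hint1 : IntegrableOn G (Ioc 0 a) := hGcont.integrableOn_Ioc
  have heq2 : EqOn (fun x => Real.exp (-ξ*x) * (x/a)) G (Ioi a) := by
    intro x hx
    simp only [hG]
    rw [max_eq_right ((one_le_div ha).2 (le_of_lt hx))]
  have hint2 : IntegrableOn G (Ioi a) := (integrableOn_congr_fun heq2 measurableSet_Ioi).1 hI2int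
  have hGint : IntegrableOn G (Ioi 0) := by
    rw [← Ioc_union_Ioi_eq_Ioi ha.le]
    exact hint1.union hint2
  have hIG : ∫ x in Ioi (0:ℝ), G x = (1 - E)/ξ + (1/ξ + 1/(a*ξ^2)) * E := by
    rw [← Ioc_union_Ioi_eq_Ioi ha.le,
      setIntegral_union (Ioc_disjoint_Ioi le_rfl) measurableSet_Ioi hint1 hint2]
    have e1 : ∫ x in Ioc (0:ℝ) a, G x = ∫ x in Ioc (0:ℝ) a, Real.exp (-ξ*x) := by
      apply setIntegral_congr_fun measurableSet_Ioc
      intro x hx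
      simp only [hG]
      rw [max_eq_left ((div_le_one ha).2 hx.2), mul_one]
    have e2 : ∫ x in Ioi a, G x = ∫ x in Ioi a, Real.exp (-ξ*x) * (x/a) :=
      (setIntegral_congr_fun measurableSet_Ioi heq2).symm
    rw [e1, e2, hI1, hI2]
  -- bound the integrand
  have hb' : ∀ x ∈ Ioi (0:ℝ), Real.exp (-ξ*x) * f x ≤ (c * f a) * G x := by
    intro x hx
    have h := mul_le_mul_of_nonneg_left (hbound x hx) (Real.exp_pos (-ξ*x)).le
    calc Real.exp (-ξ*x) * f x ≤ Real.exp (-ξ*x) * (c * f a * max 1 (x/a)) := h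
      _ = (c * f a) * G x := by simp only [hG]; ring
  -- integrability of the main integrand
  have hintf : IntegrableOn (fun x => Real.exp (-ξ*x) * f x) (Ioi 0) := by
    apply Integrable.mono' (hGint.const_mul (c * f a))
    · exact ((Real.continuous_exp.comp (continuous_const.mul continuous_id)).measurable.mul
        hmeas).aestronglyMeasurable
    · rw [ae_restrict_iff' measurableSet_Ioi]
      filter_upwards with x hx
      rw [Real.norm_eq_abs, abs_of_nonneg (mul_nonneg (Real.exp_pos _).le (hnonneg x hx))]
      exact hb' x hx
  have hmono : ∫ x in Ioi (0:ℝ), Real.exp (-ξ*x) * f x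
      ≤ (c * f a) * ((1 - E)/ξ + (1/ξ + 1/(a*ξ^2)) * E) := by
    have := setIntegral_mono_on hintf (hGint.const_mul (c * f a)) measurableSet_Ioi hb'
    rwa [integral_const_mul, hIG] at this
  have hD : 0 < c * (1 + (a*ξ)⁻¹ * E) := by
    apply mul_pos hc0
    positivity
  rw [div_le_iff₀ hD]
  calc ξ * (∫ x in Ioi (0:ℝ), Real.exp (-ξ*x) * f x)
      ≤ ξ * ((c * f a) * ((1 - E)/ξ + (1/ξ + 1/(a*ξ^2)) * E)) :=
        mul_le_mul_of_nonneg_left hmono hξ.le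
    _ = f a * (c * (1 + (a*ξ)⁻¹ * E)) := by
        field_simp
        ring
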